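/- Let T be a commuting row contraction on H whose characteristic function is a polynomial, i.e., there exists m ∈ ℕ with θ_{T,β} = 0 for all β ∈ ℕ^n with |β| > m. Then T is pure — meaning lim_{k→∞} ∑_{α ∈ ℕ^n, |α| = k} γ_α ‖T^{*α} h‖² = 0 for every h ∈ H — if and only if H_c = {0}, where H_c := {h ∈ H : ∑_{|α|=k} γ_α ‖T^{*α} h‖² = ‖h‖² for all k ∈ ℕ}. -/

import Mathlib

open scoped InnerProductSpace

set_option maxHeartbeats 1000000
set_option synthInstance.maxHeartbeats 400000

noncomputable section

namespace RowContr

instance {n : ℕ} {H : Type*} [NormedAddCommGroup H] [CompleteSpace H] :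
    CompleteSpace (PiLp 2 fun _ : Fin n => H) :=
  inferInstance

/-- Ordered product `T^α = T 0 ^ α 0 ⬝ ⋯ ⬝ T (n-1) ^ α (n-1)`
(for commuting tuples the order is immaterial). -/
def mpow {n : ℕ} {H : Type*} [NormedAddCommGroup H] [InnerProductSpace ℂ H]
    (T : Fin n → H →L[ℂ] H) (α : Fin n → ℕ) : H →L[ℂ] H :=
  (List.ofFn fun i => (T i) ^ (α i)).prod

/-- The finset of all multi-indices `α : Fin n → ℕ` with `|α| = k`. -/
def multiIdx (n k : ℕ) : Finset (Fin n → ℕ) :=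
  (Fintype.piFinset fun _ : Fin n => Finset.range (k + 1)).filter fun α => ∑ i, α i = k

/-- The row operator `E^n → F` associated with a tuple of operators, acting on the
Hilbert direct sum `PiLp 2`. -/
def rowOp {n : ℕ} {E F : Type*} [NormedAddCommGroup E] [InnerProductSpace ℂ E]
    [NormedAddCommGroup F] [InnerProductSpace ℂ F]
    (T : Fin n → E →L[ℂ] F) : PiLp 2 (fun _ : Fin n => E) →L[ℂ] F :=
  ∑ i, (T i).comp (PiLp.proj 2 (fun _ : Fin n => E) i)

/-- The `α`-th Taylor coefficient of the characteristic function of `T`, where `Dstar`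
plays the role of the defect operator `D_{T*}` and `D` the role of `D_T`:
`θ_{T,α} = ∑_{j : α_j ≥ 1} γ_{α-e_j} • D_{T*} T^{*(α-e_j)} P_j D_T`. -/
def charCoeff {n : ℕ} {H : Type*} [NormedAddCommGroup H] [InnerProductSpace ℂ H]
    [CompleteSpace H] (T : Fin n → H →L[ℂ] H) (Dstar : H →L[ℂ] H)
    (D : PiLp 2 (fun _ : Fin n => H) →L[ℂ] PiLp 2 (fun _ : Fin n => H))
    (α : Fin n → ℕ) : PiLp 2 (fun _ : Fin n => H) →L[ℂ] H :=
  ∑ j ∈ Finset.univ.filter (fun j => 0 < α j),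
    (Nat.multinomial Finset.univ (α - Pi.single j 1) : ℂ) •
      (Dstar ∘L (star (mpow T (α - Pi.single j 1))) ∘L (PiLp.proj 2 (fun _ : Fin n => H) j) ∘L D)

/-- The closure of the span of `{T^α D_{T*} h : h ∈ H, |α| ≥ m}`. -/
def rangeSpanGE {n : ℕ} {H : Type*} [NormedAddCommGroup H] [InnerProductSpace ℂ H]
    (T : Fin n → H →L[ℂ] H) (Dstar : H →L[ℂ] H) (m : ℕ) : Submodule ℂ H :=
  (Submodule.span ℂ
    {x : H | ∃ (α : Fin n → ℕ) (h : H), m ≤ ∑ i, α i ∧ x = mpow T α (Dstar h)}).topologicalClosure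

/-- The closure of the span of `{T^α D_{T*} h : h ∈ H, |α| = m}`. -/
def rangeSpanEQ {n : ℕ} {H : Type*} [NormedAddCommGroup H] [InnerProductSpace ℂ H]
    (T : Fin n → H →L[ℂ] H) (Dstar : H →L[ℂ] H) (m : ℕ) : Submodule ℂ H :=
  (Submodule.span ℂ
    {x : H | ∃ (α : Fin n → ℕ) (h : H), ∑ i, α i = m ∧ x = mpow T α (Dstar h)}).topologicalClosure

/-- The closure of the span of `{T^α D_{T*} h : h ∈ H, α ∈ ℕ^n}`. -/
def rangeSpanAll {n : ℕ} {H : Type*} [NormedAddCommGroup H] [InnerProductSpace ℂ H]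
    (T : Fin n → H →L[ℂ] H) (Dstar : H →L[ℂ] H) : Submodule ℂ H :=
  (Submodule.span ℂ
    {x : H | ∃ (α : Fin n → ℕ) (h : H), x = mpow T α (Dstar h)}).topologicalClosure

/-- The set `H_c = {h ∈ H : ∑_{|α| = k} γ_α ‖T^{*α} h‖² = ‖h‖² for all k ∈ ℕ}`. -/
def Hc {n : ℕ} {H : Type*} [NormedAddCommGroup H] [InnerProductSpace ℂ H] [CompleteSpace H]
    (T : Fin n → H →L[ℂ] H) : Set H :=
  {h : H | ∀ k : ℕ, ∑ α ∈ multiIdx n k,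
    (Nat.multinomial Finset.univ α : ℝ) * ‖star (mpow T α) h‖ ^ 2 = ‖h‖ ^ 2}

section MpowLemmas

variable {n : ℕ} {H : Type*} [NormedAddCommGroup H] [InnerProductSpace ℂ H]
variable {T : Fin n → H →L[ℂ] H}

private theorem noncommProd_list {M : Type*} [Monoid M] :
    ∀ (l : List M) (s : Multiset M) (hs : s = ↑l) (c : _), s.noncommProd c = l.prod := by
  intro l s hs
  subst hs
  intro c
  exact Multiset.noncommProd_coe l c

theorem pow_comm_pairwise (hcomm : ∀ i j, Commute (T i) (T j)) (α : Fin n → ℕ) :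
    ((Finset.univ : Finset (Fin n)) : Set (Fin n)).Pairwise
      (Function.onFun Commute fun i => T i ^ α i) :=
  fun i _ j _ _ => (hcomm i j).pow_pow _ _

theorem mpow_eq_noncommProd (hcomm : ∀ i j, Commute (T i) (T j)) (α : Fin n → ℕ) :
    mpow T α = Finset.univ.noncommProd (fun i => T i ^ α i)
      (pow_comm_pairwise hcomm α) := by
  rw [Finset.noncommProd, noncommProd_list (List.ofFn fun i => T i ^ α i) _
    (by rw [← Fin.univ_val_map])]
  rfl

theorem mpow_zero : mpow T (0 : Fin n → ℕ) = 1 := by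
  rw [mpow]
  apply List.prod_eq_one
  intro x hx
  rw [List.mem_ofFn] at hx
  obtain ⟨i, rfl⟩ := hx
  exact pow_zero _

theorem commute_mpow (hcomm : ∀ i j, Commute (T i) (T j)) (j : Fin n) (α : Fin n → ℕ) :
    Commute (T j) (mpow T α) := by
  rw [mpow_eq_noncommProd hcomm]
  exact (Finset.noncommProd_commute _ _ _ _ fun i _ => ((hcomm j i).pow_right _))

theorem mpow_add (hcomm : ∀ i j, Commute (T i) (T j)) (α β : Fin n → ℕ) :
    mpow T (α + β) = mpow T α * mpow T β := by
  rw [mpow_eq_noncommProd hcomm, mpow_eq_noncommProd hcomm, mpow_eq_noncommProd hcomm,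
    ← Finset.noncommProd_mul_distrib]
  · apply Finset.noncommProd_congr rfl
    intro i _
    exact pow_add _ _ _
  · intro i _ j _ hij; exact (hcomm i j).pow_pow _ _

theorem mpow_single (hcomm : ∀ i j, Commute (T i) (T j)) (j : Fin n) :
    mpow T (Pi.single j 1) = T j := by
  classical
  rw [mpow_eq_noncommProd hcomm]
  have h1 : ∀ x ∈ Finset.univ.erase j, T x ^ (Pi.single j 1 : Fin n → ℕ) x = 1 := by
    intro x hx
    rw [Pi.single_eq_of_ne (Finset.ne_of_mem_erase hx)]
    exact pow_zero _
  rw [← Finset.mul_noncommProd_erase Finset.univ (Finset.mem_univ j) _ _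
      (Set.Pairwise.mono (Finset.coe_subset.mpr (Finset.erase_subset j _))
        (pow_comm_pairwise hcomm _)),
    Finset.noncommProd_eq_pow_card _ _ _ 1 h1]
  simp

/-- peeling form: `T^{δ + e_j} = T_j ∘ T^δ`. -/
theorem mpow_single_add (hcomm : ∀ i j, Commute (T i) (T j)) (j : Fin n) (δ : Fin n → ℕ) :
    mpow T (δ + Pi.single j 1) = T j * mpow T δ := by
  rw [mpow_add hcomm, mpow_single hcomm]
  exact (commute_mpow hcomm j δ).symm.eq.symm ▸ rfl

end MpowLemmas

section MultiIdxLemmas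

variable {n : ℕ}

theorem mem_multiIdx {α : Fin n → ℕ} {k : ℕ} : α ∈ multiIdx n k ↔ ∑ i, α i = k := by
  classical
  constructor
  · intro h
    exact (Finset.mem_filter.mp h).2
  · intro h
    refine Finset.mem_filter.mpr ⟨?_, h⟩
    refine Fintype.mem_piFinset.mpr fun i => ?_
    rw [Finset.mem_range]
    have : α i ≤ ∑ i, α i := Finset.single_le_sum (fun _ _ => Nat.zero_le _) (Finset.mem_univ i)
    omega

theorem sum_sub_single {β : Fin n → ℕ} {j : Fin n} (hj : 0 < β j) :
    ∑ i, (β - Pi.single j 1 : Fin n → ℕ) i + 1 = ∑ i, β i := by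
  classical
  rw [← Finset.add_sum_erase _ _ (Finset.mem_univ j), ← Finset.add_sum_erase _ β (Finset.mem_univ j)]
  have h1 : ∀ x ∈ Finset.univ.erase j, (β - Pi.single j 1 : Fin n → ℕ) x = β x := by
    intro x hx
    simp [Pi.single_eq_of_ne (Finset.ne_of_mem_erase hx)]
  rw [Finset.sum_congr rfl h1]
  have : (β - Pi.single j 1 : Fin n → ℕ) j = β j - 1 := by simp
  have heq : (Finset.univ.erase j).sum β = ∑ x ∈ Finset.univ.erase j, β x := rfl
  omega

theorem prod_factorial_sub_single {β : Fin n → ℕ} {j : Fin n} (hj : 0 < β j) :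
    (∏ i, Nat.factorial ((β - Pi.single j 1 : Fin n → ℕ) i)) * β j = ∏ i, Nat.factorial (β i) := by
  classical
  rw [← Finset.mul_prod_erase _ _ (Finset.mem_univ j), ← Finset.mul_prod_erase _ (fun i => Nat.factorial (β i)) (Finset.mem_univ j)]
  have h1 : ∀ x ∈ Finset.univ.erase j, Nat.factorial ((β - Pi.single j 1 : Fin n → ℕ) x) = Nat.factorial (β x) := by
    intro x hx
    simp [Pi.single_eq_of_ne (Finset.ne_of_mem_erase hx)]
  rw [Finset.prod_congr rfl h1]
  have h2 : (β - Pi.single j 1 : Fin n → ℕ) j = β j - 1 := by simp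
  rw [h2]
  have h3 : Nat.factorial (β j - 1) * β j = Nat.factorial (β j) := by
    cases' Nat.exists_eq_succ_of_ne_zero (Nat.pos_iff_ne_zero.mp hj) with k hk
    rw [hk]
    simp [Nat.factorial_succ, Nat.mul_comm]
  rw [mul_right_comm, h3]

/-- Pascal rule for multinomial coefficients. -/
theorem multinomial_pascal (β : Fin n → ℕ) (hs : 0 < ∑ i, β i) :
    Nat.multinomial Finset.univ β
      = ∑ j ∈ Finset.univ.filter (fun j => 0 < β j),
          Nat.multinomial Finset.univ (β - Pi.single j 1) := by
  classical
  have hprodpos : 0 < ∏ i, Nat.factorial (β i) :=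
    Finset.prod_pos fun i _ => Nat.factorial_pos _
  apply Nat.eq_of_mul_eq_mul_right hprodpos
  rw [Finset.sum_mul]
  have hterm : ∀ j ∈ Finset.univ.filter (fun j => 0 < β j),
      Nat.multinomial Finset.univ (β - Pi.single j 1) * ∏ i, Nat.factorial (β i)
        = Nat.factorial (∑ i, β i - 1) * β j := by
    intro j hj
    have hbj : 0 < β j := (Finset.mem_filter.mp hj).2
    rw [← prod_factorial_sub_single hbj, ← Nat.mul_assoc]
    congr 1
    rw [Nat.mul_comm, Nat.multinomial_spec]
    congr 1
    have := sum_sub_single (β := β) hbj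
    omega
  rw [Finset.sum_congr rfl hterm, ← Finset.mul_sum]
  have hsum : ∑ j ∈ Finset.univ.filter (fun j => 0 < β j), β j = ∑ j, β j := by
    apply Finset.sum_filter_of_ne
    intro j _ h
    exact Nat.pos_of_ne_zero h
  rw [hsum]
  rw [Nat.mul_comm (Nat.multinomial _ _), Nat.multinomial_spec]
  cases' Nat.exists_eq_succ_of_ne_zero (Nat.pos_iff_ne_zero.mp hs) with k hk
  rw [hk]
  simp [Nat.factorial_succ, Nat.mul_comm]

theorem multiIdx_zero_mem {α : Fin n → ℕ} : α ∈ multiIdx n 0 ↔ α = 0 := by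
  rw [mem_multiIdx, Finset.sum_eq_zero_iff]
  constructor
  · intro h; funext i; exact h i (Finset.mem_univ i)
  · intro h i _; rw [h]; rfl

theorem multinomial_zero' : Nat.multinomial (Finset.univ : Finset (Fin n)) 0 = 1 := by
  have := Nat.multinomial_spec (Finset.univ : Finset (Fin n)) 0
  simpa using this

end MultiIdxLemmas

section Analytic

variable {n : ℕ} {H : Type*} [NormedAddCommGroup H] [InnerProductSpace ℂ H] [CompleteSpace H]
variable {T : Fin n → H →L[ℂ] H}

theorem mpow_add_single (hcomm : ∀ i j, Commute (T i) (T j)) (α : Fin n → ℕ) (j : Fin n) :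
    mpow T (α + Pi.single j 1) = mpow T α * T j := by
  rw [mpow_add hcomm, mpow_single hcomm]

theorem sub_add_single {β : Fin n → ℕ} {j : Fin n} (hj : 0 < β j) :
    β - Pi.single j 1 + Pi.single j 1 = β := by
  funext i
  classical
  by_cases h : i = j
  · subst h
    simp only [Pi.add_apply, Pi.sub_apply, Pi.single_eq_same]
    omega
  · simp [Pi.single_eq_of_ne h]

theorem add_sub_single {α : Fin n → ℕ} {j : Fin n} :
    α + Pi.single j 1 - Pi.single j 1 = α := by
  funext i
  classical
  by_cases h : i = j
  · subst h
    simp only [Pi.sub_apply, Pi.add_apply, Pi.single_eq_same]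
    omega
  · simp [Pi.single_eq_of_ne h]

theorem sum_add_single {α : Fin n → ℕ} {j : Fin n} :
    ∑ i, (α + Pi.single j 1 : Fin n → ℕ) i = (∑ i, α i) + 1 := by
  classical
  simp only [Pi.add_apply]
  rw [Finset.sum_add_distrib]
  congr 1
  rw [Finset.sum_pi_single']
  simp

/-- Generic reindexing between level `k+1` and level `k` multi-indices. -/
theorem reindex_sum (F : (Fin n → ℕ) → Fin n → ℝ) (k : ℕ) :
    ∑ β ∈ multiIdx n (k+1), ∑ j ∈ Finset.univ.filter (fun j => 0 < β j),
        F (β - Pi.single j 1) j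
      = ∑ α ∈ multiIdx n k, ∑ j, F α j := by
  classical
  have e1 := Finset.sum_sigma' (multiIdx n (k+1)) (fun β => Finset.univ.filter (fun j => 0 < β j))
    (fun β j => F (β - Pi.single j 1) j)
  have e2 := Finset.sum_sigma' (multiIdx n k) (fun _ => (Finset.univ : Finset (Fin n)))
    (fun α j => F α j)
  refine e1.trans (Eq.trans ?_ e2.symm)
  refine Finset.sum_nbij' (fun p => ⟨p.1 - Pi.single p.2 1, p.2⟩)
    (fun p => ⟨p.1 + Pi.single p.2 1, p.2⟩) ?_ ?_ ?_ ?_ ?_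
  · rintro ⟨β, j⟩ hp
    dsimp only
    rw [Finset.mem_sigma] at hp
    obtain ⟨h1, h2⟩ := hp
    rw [Finset.mem_filter] at h2
    rw [mem_multiIdx] at h1
    refine Finset.mem_sigma.mpr ⟨?_, Finset.mem_univ _⟩
    rw [mem_multiIdx]
    have hb : 0 < β j := h2.2
    have hsum : ∑ i, β i = k + 1 := h1
    have := sum_sub_single (β := β) hb
    change ∑ i, (β - Pi.single j 1 : Fin n → ℕ) i = k
    omega
  · rintro ⟨α, j⟩ hp
    dsimp only
    rw [Finset.mem_sigma, mem_multiIdx] at hp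
    refine Finset.mem_sigma.mpr ⟨?_, ?_⟩
    · rw [mem_multiIdx]
      change ∑ i, (α + Pi.single j 1 : Fin n → ℕ) i = k + 1
      rw [sum_add_single]
      have h1 : ∑ i, α i = k := hp.1
      omega
    · refine Finset.mem_filter.mpr ⟨Finset.mem_univ _, ?_⟩
      simp
  · rintro ⟨β, j⟩ hp
    rw [Finset.mem_sigma] at hp
    have h2 := (Finset.mem_filter.mp hp.2).2
    have : β - Pi.single j 1 + Pi.single j 1 = β := sub_add_single h2
    simp only [Sigma.mk.inj_iff]
    exact ⟨by rw [this], heq_of_eq rfl⟩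
  · rintro ⟨α, j⟩ _
    simp only [Sigma.mk.inj_iff]
    exact ⟨by rw [add_sub_single], heq_of_eq rfl⟩
  · rintro ⟨β, j⟩ _
    rfl

end Analytic

section Core

variable {n : ℕ} {H : Type*} [NormedAddCommGroup H] [InnerProductSpace ℂ H] [CompleteSpace H]
variable {T : Fin n → H →L[ℂ] H} {Dstar : H →L[ℂ] H}

/-- abbreviation for the quantity in purity/`Hc`. -/
def fk (T : Fin n → H →L[ℂ] H) (h : H) (k : ℕ) : ℝ :=
  ∑ α ∈ multiIdx n k, (Nat.multinomial Finset.univ α : ℝ) * ‖star (mpow T α) h‖ ^ 2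

theorem selfadj_inner_move {A : H →L[ℂ] H} (hA : IsSelfAdjoint A) (x y : H) :
    (inner ℂ (A x) y : ℂ) = inner ℂ x (A y) := by
  have hadj : ContinuousLinearMap.adjoint A = A := by
    rw [← ContinuousLinearMap.star_eq_adjoint]; exact hA
  conv_lhs => rw [← hadj]
  exact ContinuousLinearMap.adjoint_inner_left A y x

/-- The defect identity: `∑_j ‖T_j^* u‖² = ‖u‖² - ‖D_{T*} u‖²`. -/
theorem defect_identity (hD1 : Dstar.IsPositive)
    (hD2 : Dstar ∘L Dstar = 1 - ∑ i, T i ∘L star (T i)) (u : H) :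
    ∑ j, ‖star (T j) u‖ ^ 2 = ‖u‖ ^ 2 - ‖Dstar u‖ ^ 2 := by
  have h1 : (inner ℂ ((Dstar ∘L Dstar) u) u : ℂ) = inner ℂ ((1 - ∑ i, T i ∘L star (T i) : H →L[ℂ] H) u) u := by
    rw [hD2]
  rw [ContinuousLinearMap.comp_apply] at h1
  have h2 : (inner ℂ (Dstar (Dstar u)) u : ℂ) = inner ℂ (Dstar u) (Dstar u) := by
    rw [selfadj_inner_move hD1.isSelfAdjoint]
  have h3 : ((1 - ∑ i, T i ∘L star (T i) : H →L[ℂ] H) u) = u - ∑ i, (T i) (star (T i) u) := by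
    simp [ContinuousLinearMap.sub_apply, ContinuousLinearMap.sum_apply]
  rw [h2, h3, inner_sub_left, sum_inner] at h1
  have h4 : ∀ i : Fin n, (inner ℂ ((T i) (star (T i) u)) u : ℂ)
      = inner ℂ (star (T i) u) (star (T i) u) := by
    intro i
    rw [ContinuousLinearMap.star_eq_adjoint]
    exact (ContinuousLinearMap.adjoint_inner_right (T i) _ u).symm
  rw [Finset.sum_congr rfl (fun i _ => h4 i)] at h1
  simp only [inner_self_eq_norm_sq_to_K] at h1
  have h6 : (‖Dstar u‖ ^ 2 : ℝ) = ‖u‖ ^ 2 - ∑ i, ‖star (T i) u‖ ^ 2 := by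
    exact_mod_cast h1
  linarith

theorem fk_zero (h : H) : fk T h 0 = ‖h‖ ^ 2 := by
  classical
  rw [fk]
  rw [show multiIdx n 0 = {(0 : Fin n → ℕ)} from Finset.ext fun α => by
    rw [multiIdx_zero_mem, Finset.mem_singleton]]
  rw [Finset.sum_singleton, multinomial_zero', mpow_zero]
  simp

theorem fk_succ (hcomm : ∀ i j, Commute (T i) (T j)) (hD1 : Dstar.IsPositive)
    (hD2 : Dstar ∘L Dstar = 1 - ∑ i, T i ∘L star (T i)) (h : H) (k : ℕ) :
    fk T h (k + 1) = fk T h k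
      - ∑ α ∈ multiIdx n k, (Nat.multinomial Finset.univ α : ℝ)
          * ‖Dstar (star (mpow T α) h)‖ ^ 2 := by
  classical
  have step1 : fk T h (k+1)
      = ∑ β ∈ multiIdx n (k+1), ∑ j ∈ Finset.univ.filter (fun j => 0 < β j),
          (Nat.multinomial Finset.univ (β - Pi.single j 1) : ℝ) * ‖star (mpow T β) h‖ ^ 2 := by
    rw [fk]
    refine Finset.sum_congr rfl fun β hβ => ?_
    rw [mem_multiIdx] at hβ
    rw [multinomial_pascal β (by omega)]
    rw [← Finset.sum_mul]
    push_cast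
    ring
  have step2 : ∀ β : Fin n → ℕ, ∀ j : Fin n, 0 < β j →
      ‖star (mpow T β) h‖ = ‖star (T j) (star (mpow T (β - Pi.single j 1)) h)‖ := by
    intro β j hj
    have : mpow T β = mpow T (β - Pi.single j 1) * T j := by
      rw [← mpow_add_single hcomm, sub_add_single hj]
    rw [this, star_mul, ContinuousLinearMap.mul_apply]
  have step3 : fk T h (k+1)
      = ∑ α ∈ multiIdx n k, ∑ j,
          (Nat.multinomial Finset.univ α : ℝ)
            * ‖star (T j) (star (mpow T α) h)‖ ^ 2 := by
    rw [step1]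
    rw [← reindex_sum (fun α j => (Nat.multinomial Finset.univ α : ℝ)
      * ‖star (T j) (star (mpow T α) h)‖ ^ 2) k]
    refine Finset.sum_congr rfl fun β hβ => Finset.sum_congr rfl fun j hj => ?_
    have hj2 : 0 < β j := (Finset.mem_filter.mp hj).2
    rw [step2 β j hj2]
  rw [step3]
  have step4 : ∀ α ∈ multiIdx n k,
      ∑ j, (Nat.multinomial Finset.univ α : ℝ) * ‖star (T j) (star (mpow T α) h)‖ ^ 2
        = (Nat.multinomial Finset.univ α : ℝ) * ‖star (mpow T α) h‖ ^ 2
          - (Nat.multinomial Finset.univ α : ℝ) * ‖Dstar (star (mpow T α) h)‖ ^ 2 := by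
    intro α _
    rw [← Finset.mul_sum, defect_identity hD1 hD2]
    ring
  rw [Finset.sum_congr rfl step4, Finset.sum_sub_distrib]
  rfl

theorem fk_nonneg (h : H) (k : ℕ) : 0 ≤ fk T h k := by
  apply Finset.sum_nonneg
  intro α _
  positivity

theorem fk_le (hcomm : ∀ i j, Commute (T i) (T j)) (hD1 : Dstar.IsPositive)
    (hD2 : Dstar ∘L Dstar = 1 - ∑ i, T i ∘L star (T i)) (h : H) :
    ∀ k, fk T h k ≤ ‖h‖ ^ 2 := by
  intro k
  induction k with
  | zero => rw [fk_zero]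
  | succ k ih =>
    rw [fk_succ hcomm hD1 hD2]
    have : 0 ≤ ∑ α ∈ multiIdx n k, (Nat.multinomial Finset.univ α : ℝ)
        * ‖Dstar (star (mpow T α) h)‖ ^ 2 := by
      apply Finset.sum_nonneg; intro α _; positivity
    linarith

/-- Membership criterion for `Hc`. -/
theorem mem_Hc_of_defect_zero (hcomm : ∀ i j, Commute (T i) (T j)) (hD1 : Dstar.IsPositive)
    (hD2 : Dstar ∘L Dstar = 1 - ∑ i, T i ∘L star (T i)) (h : H)
    (hz : ∀ α : Fin n → ℕ, Dstar (star (mpow T α) h) = 0) : h ∈ Hc T := by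
  have key : ∀ k, fk T h k = ‖h‖ ^ 2 := by
    intro k
    induction k with
    | zero => exact fk_zero h
    | succ k ih =>
      rw [fk_succ hcomm hD1 hD2, ih]
      have : ∀ α ∈ multiIdx n k, (Nat.multinomial Finset.univ α : ℝ)
          * ‖Dstar (star (mpow T α) h)‖ ^ 2 = 0 := by
        intro α _
        rw [hz α]
        simp
      rw [Finset.sum_congr rfl this]
      simp
  exact key

end Core

section Relations

variable {n : ℕ} {H : Type*} [NormedAddCommGroup H] [InnerProductSpace ℂ H] [CompleteSpace H]
variable {T : Fin n → H →L[ℂ] H} {Dstar : H →L[ℂ] H}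

theorem inner_move_star {E : Type*} [NormedAddCommGroup E] [InnerProductSpace ℂ E]
    [CompleteSpace E] (A : E →L[ℂ] E) (x y : E) :
    (inner ℂ (A x) y : ℂ) = inner ℂ x (star A y) := by
  rw [ContinuousLinearMap.star_eq_adjoint]
  exact (ContinuousLinearMap.adjoint_inner_right A x y).symm

theorem selfadj_inner_move' {E : Type*} [NormedAddCommGroup E] [InnerProductSpace ℂ E]
    [CompleteSpace E] {A : E →L[ℂ] E} (hA : IsSelfAdjoint A) (x y : E) :
    (inner ℂ (A x) y : ℂ) = inner ℂ x (A y) := by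
  rw [inner_move_star]
  rw [hA.star_eq]

/-- The fundamental relations extracted from vanishing Taylor coefficients:
for `|β| > m`, `γ_β T_j^* T^β D_* = γ_{β-e_j} T^{β-e_j} D_*` (zero if `β j = 0`). -/
theorem relation_AB
    {D : PiLp 2 (fun _ : Fin n => H) →L[ℂ] PiLp 2 (fun _ : Fin n => H)}
    (hcomm : ∀ i j, Commute (T i) (T j))
    (hD1 : Dstar.IsPositive) (hDT1 : D.IsPositive)
    (hDT2 : D ∘L D = 1 - (ContinuousLinearMap.adjoint (rowOp T)) ∘L rowOp T)
    {m : ℕ} (hpoly : ∀ β : Fin n → ℕ, m < ∑ i, β i → charCoeff T Dstar D β = 0)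
    {β : Fin n → ℕ} (hβ : m < ∑ i, β i) (j : Fin n) (g : H) :
    ((Nat.multinomial Finset.univ β : ℂ)) • star (T j) (mpow T β (Dstar g))
      = if 0 < β j then ((Nat.multinomial Finset.univ (β - Pi.single j 1) : ℂ))
          • mpow T (β - Pi.single j 1) (Dstar g) else (0 : H) := by
  classical
  set xf : ∀ _ : Fin n, H := fun i => if 0 < β i
    then ((Nat.multinomial Finset.univ (β - Pi.single i 1) : ℂ))
      • mpow T (β - Pi.single i 1) (Dstar g) else (0 : H) with hxf
  set x : PiLp 2 (fun _ : Fin n => H) := (WithLp.equiv 2 (∀ _ : Fin n, H)).symm xf with hx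
  have hxapp : ∀ i, x i = xf i := fun i => rfl
  -- Step A : ⟪x, D y⟫ = 0 for all y
  have stepA : ∀ y : PiLp 2 (fun _ : Fin n => H), (inner ℂ x (D y) : ℂ) = 0 := by
    intro y
    rw [PiLp.inner_apply]
    have hterm : ∀ i : Fin n,
        (inner ℂ (x i) ((D y) i) : ℂ)
          = if 0 < β i then (inner ℂ g ((Nat.multinomial Finset.univ (β - Pi.single i 1) : ℂ) •
              (Dstar ((star (mpow T (β - Pi.single i 1))) ((D y) i)))) : ℂ) else 0 := by
      intro i
      rw [hxapp]
      by_cases hb : 0 < β i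
      · simp only [hxf, if_pos hb]
        rw [inner_smul_left, inner_smul_right]
        congr 1
        · exact map_natCast (starRingEnd ℂ) _
        · rw [inner_move_star (mpow T (β - Pi.single i 1)),
            selfadj_inner_move' hD1.isSelfAdjoint]
      · simp only [hxf, if_neg hb, inner_zero_left, if_neg hb]
    rw [Finset.sum_congr rfl fun i _ => hterm i]
    rw [Finset.sum_ite, Finset.sum_const_zero, add_zero]
    have : ∑ i ∈ Finset.filter (fun i => 0 < β i) Finset.univ,
        (inner ℂ g ((Nat.multinomial Finset.univ (β - Pi.single i 1) : ℂ) •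
          (Dstar ((star (mpow T (β - Pi.single i 1))) ((D y) i)))) : ℂ)
        = inner ℂ g (charCoeff T Dstar D β y) := by
      rw [charCoeff, ContinuousLinearMap.sum_apply, inner_sum]
      refine Finset.sum_congr rfl fun i _ => ?_
      congr 1
    rw [this, hpoly β hβ]
    simp
  -- Step B : D x = 0
  have stepB : D x = 0 := by
    apply ext_inner_right ℂ
    intro y
    rw [inner_zero_left, selfadj_inner_move' hDT1.isSelfAdjoint]
    exact stepA y
  -- Step C : x = R^* (R x)
  have stepC : x = (ContinuousLinearMap.adjoint (rowOp T)) (rowOp T x) := by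
    have h1 : (D ∘L D) x = 0 := by
      rw [ContinuousLinearMap.comp_apply, stepB, map_zero]
    rw [hDT2] at h1
    have h2 : x - (ContinuousLinearMap.adjoint (rowOp T)) (rowOp T x) = 0 := by
      rw [ContinuousLinearMap.sub_apply, ContinuousLinearMap.one_apply,
        ContinuousLinearMap.comp_apply] at h1
      exact h1
    rw [sub_eq_zero] at h2
    exact h2
  -- Step D : R x = γ_β • T^β D_* g
  have stepD : rowOp T x = (Nat.multinomial Finset.univ β : ℂ) • mpow T β (Dstar g) := by
    rw [rowOp, ContinuousLinearMap.sum_apply]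
    have hterm : ∀ i : Fin n, (T i).comp (PiLp.proj 2 (fun _ : Fin n => H) i) x
        = if 0 < β i then ((Nat.multinomial Finset.univ (β - Pi.single i 1) : ℂ))
            • mpow T β (Dstar g) else 0 := by
      intro i
      rw [ContinuousLinearMap.comp_apply, PiLp.proj_apply, hxapp]
      by_cases hb : 0 < β i
      · simp only [hxf, if_pos hb]
        rw [map_smul]
        congr 1
        have : mpow T β = T i * mpow T (β - Pi.single i 1) := by
          rw [← mpow_single_add hcomm, sub_add_single hb]
        rw [this, ContinuousLinearMap.mul_apply]
      · simp only [hxf, if_neg hb, map_zero, if_neg hb]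
    rw [Finset.sum_congr rfl fun i _ => hterm i, Finset.sum_ite, Finset.sum_const_zero, add_zero,
      ← Finset.sum_smul]
    congr 1
    rw [← Nat.cast_sum]
    congr 1
    exact (multinomial_pascal β (by omega)).symm
  -- Step E : components
  have stepE : ∀ y : H, (inner ℂ (x j) y : ℂ)
      = inner ℂ ((Nat.multinomial Finset.univ β : ℂ) • star (T j) (mpow T β (Dstar g))) y := by
    intro y
    have e1 : (inner ℂ (x j) y : ℂ)
        = inner ℂ x ((WithLp.equiv 2 (∀ _ : Fin n, H)).symm (Pi.single j y)) := by
      rw [PiLp.inner_apply]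
      rw [Finset.sum_eq_single j]
      · rw [WithLp.equiv_symm_apply]; simp
      · intro i _ hi
        rw [WithLp.equiv_symm_apply]; simp [Pi.single_eq_of_ne hi]
      · intro hj; exact absurd (Finset.mem_univ j) hj
    have e2 : rowOp T ((WithLp.equiv 2 (∀ _ : Fin n, H)).symm (Pi.single j y)) = T j y := by
      rw [rowOp, ContinuousLinearMap.sum_apply]
      rw [Finset.sum_eq_single j]
      · rw [ContinuousLinearMap.comp_apply, PiLp.proj_apply, WithLp.equiv_symm_apply, PiLp.toLp_apply,
          Pi.single_eq_same]
      · intro i _ hi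
        rw [ContinuousLinearMap.comp_apply, PiLp.proj_apply, WithLp.equiv_symm_apply, PiLp.toLp_apply,
          Pi.single_eq_of_ne hi, map_zero]
      · intro hj; exact absurd (Finset.mem_univ j) hj
    rw [e1]
    conv_lhs => rw [stepC]
    rw [ContinuousLinearMap.adjoint_inner_left, e2, stepD]
    rw [inner_smul_left, inner_smul_left]
    congr 1
    have hm := inner_move_star (star (T j)) (mpow T β (Dstar g)) y
    rw [star_star] at hm
    exact hm.symm
  have : x j = (Nat.multinomial Finset.univ β : ℂ) • star (T j) (mpow T β (Dstar g)) := by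
    apply ext_inner_right ℂ
    exact stepE
  rw [hxapp] at this
  rw [← this]

end Relations

section Peeling

variable {n : ℕ} {H : Type*} [NormedAddCommGroup H] [InnerProductSpace ℂ H] [CompleteSpace H]
variable {T : Fin n → H →L[ℂ] H} {Dstar : H →L[ℂ] H}
variable {D : PiLp 2 (fun _ : Fin n => H) →L[ℂ] PiLp 2 (fun _ : Fin n => H)}

theorem multinomial_ne_zero_c (β : Fin n → ℕ) :
    (Nat.multinomial Finset.univ β : ℂ) ≠ 0 := by
  exact_mod_cast (Nat.multinomial_pos Finset.univ β).ne'

/-- Relation (C): `D_{T*} T^β D_{T*} = 0` for `|β| > m`. -/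
theorem relation_C
    (hcomm : ∀ i j, Commute (T i) (T j))
    (hD1 : Dstar.IsPositive)
    (hD2 : Dstar ∘L Dstar = 1 - ∑ i, T i ∘L star (T i))
    (hDT1 : D.IsPositive)
    (hDT2 : D ∘L D = 1 - (ContinuousLinearMap.adjoint (rowOp T)) ∘L rowOp T)
    {m : ℕ} (hpoly : ∀ β : Fin n → ℕ, m < ∑ i, β i → charCoeff T Dstar D β = 0)
    {β : Fin n → ℕ} (hβ : m < ∑ i, β i) (g : H) :
    Dstar (mpow T β (Dstar g)) = 0 := by
  classical
  set v := mpow T β (Dstar g) with hv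
  have hDD : Dstar (Dstar v) = v - ∑ i, T i (star (T i) v) := by
    have := congrArg (fun A : H →L[ℂ] H => A v) hD2
    simpa [ContinuousLinearMap.comp_apply, ContinuousLinearMap.sub_apply,
      ContinuousLinearMap.sum_apply] using this
  have hsum : (Nat.multinomial Finset.univ β : ℂ) • (∑ i, T i (star (T i) v))
      = (Nat.multinomial Finset.univ β : ℂ) • v := by
    rw [Finset.smul_sum]
    have hterm : ∀ i : Fin n, (Nat.multinomial Finset.univ β : ℂ) • T i (star (T i) v)
        = if 0 < β i then ((Nat.multinomial Finset.univ (β - Pi.single i 1) : ℂ)) • v else 0 := by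
      intro i
      rw [← map_smul]
      rw [hv, relation_AB hcomm hD1 hDT1 hDT2 hpoly hβ i g]
      by_cases hb : 0 < β i
      · rw [if_pos hb, if_pos hb, map_smul]
        congr 1
        have : mpow T β = T i * mpow T (β - Pi.single i 1) := by
          rw [← mpow_single_add hcomm, sub_add_single hb]
        rw [this, ContinuousLinearMap.mul_apply]
      · rw [if_neg hb, if_neg hb, map_zero]
    rw [Finset.sum_congr rfl fun i _ => hterm i, Finset.sum_ite, Finset.sum_const_zero, add_zero,
      ← Finset.sum_smul]
    congr 1
    rw [← Nat.cast_sum]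
    congr 1
    exact (multinomial_pascal β (by omega)).symm
  have hzero : Dstar (Dstar v) = 0 := by
    have h1 : (Nat.multinomial Finset.univ β : ℂ) • Dstar (Dstar v) = 0 := by
      rw [hDD, smul_sub, hsum, sub_self]
    rcases smul_eq_zero.mp h1 with h | h
    · exact absurd h (multinomial_ne_zero_c β)
    · exact h
  have hinner : (inner ℂ (Dstar v) (Dstar v) : ℂ) = 0 := by
    rw [← selfadj_inner_move' hD1.isSelfAdjoint, hzero, inner_zero_left]
  exact inner_self_eq_zero.mp hinner

/-- The iterated peeling lemma: `D_{T*} T^{*δ} T^η D_{T*} = 0` whenever `|η| ≥ |δ| + m + 1`. -/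
theorem lemZ
    (hcomm : ∀ i j, Commute (T i) (T j))
    (hD1 : Dstar.IsPositive)
    (hD2 : Dstar ∘L Dstar = 1 - ∑ i, T i ∘L star (T i))
    (hDT1 : D.IsPositive)
    (hDT2 : D ∘L D = 1 - (ContinuousLinearMap.adjoint (rowOp T)) ∘L rowOp T)
    {m : ℕ} (hpoly : ∀ β : Fin n → ℕ, m < ∑ i, β i → charCoeff T Dstar D β = 0) :
    ∀ (N : ℕ) (δ η : Fin n → ℕ) (g : H), ∑ i, δ i = N → N + m + 1 ≤ ∑ i, η i →
      Dstar (star (mpow T δ) (mpow T η (Dstar g))) = 0 := by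
  intro N
  induction N with
  | zero =>
    intro δ η g hδ hη
    have hδ0 : δ = 0 := by
      funext i
      exact Finset.sum_eq_zero_iff.mp hδ i (Finset.mem_univ i)
    rw [hδ0, mpow_zero, star_one, ContinuousLinearMap.one_apply]
    exact relation_C hcomm hD1 hD2 hDT1 hDT2 hpoly (by omega) g
  | succ N ih =>
    intro δ η g hδ hη
    obtain ⟨j, hj⟩ : ∃ j, 0 < δ j := by
      by_contra hcon
      push_neg at hcon
      have : ∑ i, δ i = 0 := Finset.sum_eq_zero fun i _ => Nat.le_zero.mp (hcon i)
      omega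
    have hmp : mpow T δ = T j * mpow T (δ - Pi.single j 1) := by
      rw [← mpow_single_add hcomm, sub_add_single hj]
    rw [hmp, star_mul, ContinuousLinearMap.mul_apply]
    have hηpos : m < ∑ i, η i := by omega
    have hrel := relation_AB hcomm hD1 hDT1 hDT2 hpoly hηpos j g
    by_cases hb : 0 < η j
    · rw [if_pos hb] at hrel
      have hstar : star (T j) (mpow T η (Dstar g))
          = (Nat.multinomial Finset.univ η : ℂ)⁻¹
            • ((Nat.multinomial Finset.univ (η - Pi.single j 1) : ℂ)
              • mpow T (η - Pi.single j 1) (Dstar g)) := by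
        rw [← hrel, smul_smul, inv_mul_cancel₀ (multinomial_ne_zero_c η), one_smul]
      rw [hstar, map_smul, map_smul, map_smul, map_smul]
      have hsub1 : ∑ i, (δ - Pi.single j 1 : Fin n → ℕ) i = N := by
        have := sum_sub_single (β := δ) hj
        omega
      have hsub2 : N + m + 1 ≤ ∑ i, (η - Pi.single j 1 : Fin n → ℕ) i := by
        have := sum_sub_single (β := η) hb
        omega
      rw [ih (δ - Pi.single j 1) (η - Pi.single j 1) g hsub1 hsub2]
      simp
    · rw [if_neg hb] at hrel
      have hz : star (T j) (mpow T η (Dstar g)) = 0 := by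
        rcases smul_eq_zero.mp hrel with h | h
        · exact absurd h (multinomial_ne_zero_c η)
        · exact h
      rw [hz, map_zero, map_zero]

theorem sum_add_multi {α ρ : Fin n → ℕ} :
    ∑ i, (α + ρ : Fin n → ℕ) i = (∑ i, α i) + ∑ i, ρ i := by
  simp only [Pi.add_apply]
  rw [Finset.sum_add_distrib]

/-- Adjoint form of the peeling lemma. -/
theorem lemZstar
    (hcomm : ∀ i j, Commute (T i) (T j))
    (hD1 : Dstar.IsPositive)
    (hD2 : Dstar ∘L Dstar = 1 - ∑ i, T i ∘L star (T i))
    (hDT1 : D.IsPositive)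
    (hDT2 : D ∘L D = 1 - (ContinuousLinearMap.adjoint (rowOp T)) ∘L rowOp T)
    {m : ℕ} (hpoly : ∀ β : Fin n → ℕ, m < ∑ i, β i → charCoeff T Dstar D β = 0)
    (δ η : Fin n → ℕ) (g : H) (hle : (∑ i, δ i) + m + 1 ≤ ∑ i, η i) :
    Dstar (star (mpow T η) (mpow T δ (Dstar g))) = 0 := by
  have hop : Dstar * (star (mpow T δ) * (mpow T η * Dstar)) = 0 := by
    ext g'
    have := lemZ hcomm hD1 hD2 hDT1 hDT2 hpoly (∑ i, δ i) δ η g' rfl hle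
    simpa [ContinuousLinearMap.mul_apply] using this
  have hst := congrArg star hop
  rw [star_zero] at hst
  simp only [star_mul, star_star, hD1.isSelfAdjoint.star_eq] at hst
  have := congrArg (fun A : H →L[ℂ] H => A g) hst
  simpa [ContinuousLinearMap.mul_apply] using this

/-- The crucial membership: `T^{*α} T^δ D_{T*} g ∈ H_c` whenever `|α| ≥ |δ| + m + 1`. -/
theorem u_mem_Hc
    (hcomm : ∀ i j, Commute (T i) (T j))
    (hD1 : Dstar.IsPositive)
    (hD2 : Dstar ∘L Dstar = 1 - ∑ i, T i ∘L star (T i))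
    (hDT1 : D.IsPositive)
    (hDT2 : D ∘L D = 1 - (ContinuousLinearMap.adjoint (rowOp T)) ∘L rowOp T)
    {m : ℕ} (hpoly : ∀ β : Fin n → ℕ, m < ∑ i, β i → charCoeff T Dstar D β = 0)
    (δ α : Fin n → ℕ) (g : H) (hα : (∑ i, δ i) + m + 1 ≤ ∑ i, α i) :
    star (mpow T α) (mpow T δ (Dstar g)) ∈ Hc T := by
  apply mem_Hc_of_defect_zero hcomm hD1 hD2
  intro ρ
  have hcompose : star (mpow T ρ) (star (mpow T α) (mpow T δ (Dstar g)))
      = star (mpow T (α + ρ)) (mpow T δ (Dstar g)) := by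
    rw [mpow_add hcomm α ρ, star_mul, ContinuousLinearMap.mul_apply]
  rw [hcompose]
  apply lemZstar hcomm hD1 hD2 hDT1 hDT2 hpoly
  rw [sum_add_multi]
  omega

end Peeling

theorem statement_16 {n : ℕ} {H : Type*} [NormedAddCommGroup H] [InnerProductSpace ℂ H]
    [CompleteSpace H]
    (T : Fin n → H →L[ℂ] H) (m : ℕ)
    (hcomm : ∀ i j, Commute (T i) (T j))
    (hrow : ((1 : H →L[ℂ] H) - ∑ i, T i ∘L star (T i)).IsPositive)
    (Dstar : H →L[ℂ] H) (hD1 : Dstar.IsPositive)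
    (hD2 : Dstar ∘L Dstar = 1 - ∑ i, T i ∘L star (T i))
    (D : PiLp 2 (fun _ : Fin n => H) →L[ℂ] PiLp 2 (fun _ : Fin n => H))
    (hDT1 : D.IsPositive)
    (hDT2 : D ∘L D = 1 - (ContinuousLinearMap.adjoint (rowOp T)) ∘L rowOp T)
    (hpoly : ∀ β : Fin n → ℕ, m < ∑ i, β i → charCoeff T Dstar D β = 0) :
    (∀ h : H, Filter.Tendsto
        (fun k : ℕ => ∑ α ∈ multiIdx n k,
          (Nat.multinomial Finset.univ α : ℝ) * ‖star (mpow T α) h‖ ^ 2)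
        Filter.atTop (nhds 0))
      ↔ Hc T = {0} := by
  classical
  constructor
  · -- purity implies Hc = {0}
    intro hpure
    ext x
    simp only [Set.mem_singleton_iff]
    constructor
    · intro hx
      have h2 : ∀ k : ℕ, fk T x k = ‖x‖ ^ 2 := hx
      have h1 : Filter.Tendsto (fun k : ℕ => fk T x k) Filter.atTop (nhds 0) := hpure x
      have h3 : Filter.Tendsto (fun _ : ℕ => (‖x‖ ^ 2 : ℝ)) Filter.atTop (nhds 0) := by
        have he : (fun k : ℕ => fk T x k) = fun _ : ℕ => (‖x‖ ^ 2 : ℝ) := funext h2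
        rwa [he] at h1
      have h4 : (‖x‖ ^ 2 : ℝ) = 0 := tendsto_nhds_unique tendsto_const_nhds h3
      have h5 : ‖x‖ = 0 := by
        nlinarith [norm_nonneg x]
      exact norm_eq_zero.mp h5
    · intro hx
      subst hx
      intro k
      simp
  · -- Hc = {0} implies purity
    intro hc h
    set S : Set H := {x : H | ∃ (δ : Fin n → ℕ) (g : H), x = mpow T δ (Dstar g)} with hS
    have hdense : (Submodule.span ℂ S).topologicalClosure = ⊤ := by
      rw [Submodule.topologicalClosure_eq_top_iff, Submodule.eq_bot_iff]
      intro x hx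
      have hx' : ∀ (δ : Fin n → ℕ) (g : H), (inner ℂ (mpow T δ (Dstar g)) x : ℂ) = 0 := by
        intro δ g
        exact (Submodule.mem_orthogonal _ x).mp hx _ (Submodule.subset_span ⟨δ, g, rfl⟩)
      have hdz : ∀ δ : Fin n → ℕ, Dstar (star (mpow T δ) x) = 0 := by
        intro δ
        apply ext_inner_left ℂ
        intro g
        rw [inner_zero_right]
        have hmv := hx' δ g
        rw [inner_move_star (mpow T δ) (Dstar g) x, selfadj_inner_move' hD1.isSelfAdjoint] at hmv
        exact hmv
      have hmem : x ∈ Hc T := mem_Hc_of_defect_zero hcomm hD1 hD2 x hdz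
      rw [hc] at hmem
      exact hmem
    let V : Submodule ℂ H :=
      { carrier := {v : H | ∃ K : ℕ, ∀ α : Fin n → ℕ, K ≤ ∑ i, α i → star (mpow T α) v = 0}
        add_mem' := by
          rintro a b ⟨Ka, hKa⟩ ⟨Kb, hKb⟩
          refine ⟨max Ka Kb, fun α hα => ?_⟩
          rw [map_add, hKa α (le_trans (le_max_left _ _) hα),
            hKb α (le_trans (le_max_right _ _) hα), add_zero]
        zero_mem' := ⟨0, fun α _ => map_zero _⟩
        smul_mem' := by
          rintro c a ⟨Ka, hKa⟩
          refine ⟨Ka, fun α hα => ?_⟩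
          rw [map_smul, hKa α hα, smul_zero] }
    have hSV : Submodule.span ℂ S ≤ V := by
      rw [Submodule.span_le]
      rintro x ⟨δ, g, rfl⟩
      refine ⟨(∑ i, δ i) + m + 1, fun α hα => ?_⟩
      have hmem := u_mem_Hc hcomm hD1 hD2 hDT1 hDT2 hpoly δ α g hα
      rw [hc] at hmem
      exact hmem
    show Filter.Tendsto (fun k : ℕ => fk T h k) Filter.atTop (nhds 0)
    rw [Metric.tendsto_atTop]
    intro ε hε
    have hh : h ∈ closure ((Submodule.span ℂ S : Submodule ℂ H) : Set H) := by
      have : h ∈ (Submodule.span ℂ S).topologicalClosure := by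
        rw [hdense]; exact Submodule.mem_top
      exact this
    obtain ⟨v, hvS, hvd⟩ := Metric.mem_closure_iff.mp hh (Real.sqrt ε) (Real.sqrt_pos.mpr hε)
    obtain ⟨K, hK⟩ := hSV hvS
    refine ⟨K, fun k hk => ?_⟩
    have heq : fk T h k = fk T (h - v) k := by
      refine Finset.sum_congr rfl fun α hα => ?_
      have hz : star (mpow T α) v = 0 := by
        apply hK
        rw [mem_multiIdx] at hα
        omega
      congr 2
      rw [map_sub, hz, sub_zero]
    have hb := fk_le hcomm hD1 hD2 (h - v) k
    have hnn := fk_nonneg (T := T) h k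
    have hdist : ‖h - v‖ < Real.sqrt ε := by
      rw [← dist_eq_norm]
      exact hvd
    have h2 : ‖h - v‖ ^ 2 < ε := by
      nlinarith [Real.sq_sqrt hε.le, Real.sqrt_nonneg ε, norm_nonneg (h - v)]
    rw [Real.dist_eq, sub_zero, abs_of_nonneg hnn]
    calc fk T h k = fk T (h - v) k := heq
      _ ≤ ‖h - v‖ ^ 2 := hb
      _ < ε := h2


end RowContr
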